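/- Suppose every bounded operator from A to A* is weakly compact and A** (with the first Arens product) is approximately weakly amenable; then A is approximately weakly amenable. -/

import Mathlib

set_option maxHeartbeats 1000000
set_option synthInstance.maxHeartbeats 400000


open ContinuousLinearMap Filter Topology

open ContinuousLinearMap Filter Topology

/-- A Banach `A`-bimodule: a complete normed `ℂ`-space with commuting continuous
left and right `A`-actions, jointly bounded and bilinear. -/
structure BBimod (A : Type) [NonUnitalNormedRing A] [NormedSpace ℂ A] where
  carrier : Type
  [grp : NormedAddCommGroup carrier]
  [mod : NormedSpace ℂ carrier]
  [complete : CompleteSpace carrier]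
  lsmul : A → carrier →L[ℂ] carrier
  rsmul : A → carrier →L[ℂ] carrier
  lsmul_add : ∀ a b, lsmul (a + b) = lsmul a + lsmul b
  rsmul_add : ∀ a b, rsmul (a + b) = rsmul a + rsmul b
  lsmul_smul : ∀ (c : ℂ) (a), lsmul (c • a) = c • lsmul a
  rsmul_smul : ∀ (c : ℂ) (a), rsmul (c • a) = c • rsmul a
  lsmul_mul : ∀ a b, lsmul (a * b) = (lsmul a).comp (lsmul b)
  rsmul_mul : ∀ a b, rsmul (a * b) = (rsmul b).comp (rsmul a)
  lsmul_rsmul : ∀ a b, (lsmul a).comp (rsmul b) = (rsmul b).comp (lsmul a)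
  bound : ∃ C : ℝ, ∀ a, ‖lsmul a‖ ≤ C * ‖a‖ ∧ ‖rsmul a‖ ≤ C * ‖a‖

attribute [instance] BBimod.grp BBimod.mod BBimod.complete

variable {A : Type} [NonUnitalNormedRing A] [NormedSpace ℂ A]

/-- The dual of a Banach bimodule, with the canonical dual actions
`⟨u, Λ·a⟩ = ⟨a·u, Λ⟩` and `⟨u, a·Λ⟩ = ⟨u·a, Λ⟩`. -/
noncomputable def BBimod.dual (M : BBimod A) : BBimod A where
  carrier := M.carrier →L[ℂ] ℂ
  lsmul a := (compL ℂ M.carrier M.carrier ℂ).flip (M.rsmul a)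
  rsmul a := (compL ℂ M.carrier M.carrier ℂ).flip (M.lsmul a)
  lsmul_add a b := by ext Λ x; simp [M.rsmul_add]
  rsmul_add a b := by ext Λ x; simp [M.lsmul_add]
  lsmul_smul c a := by ext Λ x; simp [M.rsmul_smul]
  rsmul_smul c a := by ext Λ x; simp [M.lsmul_smul]
  lsmul_mul a b := by ext Λ x; simp [M.rsmul_mul]
  rsmul_mul a b := by ext Λ x; simp [M.lsmul_mul]
  lsmul_rsmul a b := by
    ext Λ x
    have h : M.lsmul b (M.rsmul a x) = M.rsmul a (M.lsmul b x) := by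
      have := congrArg (fun T : M.carrier →L[ℂ] M.carrier => T x) (M.lsmul_rsmul b a)
      simpa using this
    simp [h]
  bound := by
    obtain ⟨C, hC⟩ := M.bound
    refine ⟨C, fun a => ⟨?_, ?_⟩⟩
    · refine opNorm_le_bound _ ?_ fun Λ => ?_
      · exact le_trans (norm_nonneg _) (hC a).2
      · calc ‖Λ.comp (M.rsmul a)‖ ≤ ‖Λ‖ * ‖M.rsmul a‖ := opNorm_comp_le _ _
          _ ≤ (C * ‖a‖) * ‖Λ‖ := by
              rw [mul_comm]
              exact mul_le_mul_of_nonneg_right (hC a).2 (norm_nonneg _)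
    · refine opNorm_le_bound _ ?_ fun Λ => ?_
      · exact le_trans (norm_nonneg _) (hC a).1
      · calc ‖Λ.comp (M.lsmul a)‖ ≤ ‖Λ‖ * ‖M.lsmul a‖ := opNorm_comp_le _ _
          _ ≤ (C * ‖a‖) * ‖Λ‖ := by
              rw [mul_comm]
              exact mul_le_mul_of_nonneg_right (hC a).1 (norm_nonneg _)

variable (A) [IsScalarTower ℂ A A] [SMulCommClass ℂ A A] [CompleteSpace A]

/-- `A` as a Banach bimodule over itself. -/
noncomputable def BBimod.base : BBimod A where
  carrier := A
  lsmul a := ContinuousLinearMap.mul ℂ A a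
  rsmul a := (ContinuousLinearMap.mul ℂ A).flip a
  lsmul_add a b := by ext x; simp [add_mul]
  rsmul_add a b := by ext x; simp [mul_add]
  lsmul_smul c a := by ext x; simp [smul_mul_assoc]
  rsmul_smul c a := by ext x; simp [mul_smul_comm]
  lsmul_mul a b := by ext x; simp [mul_assoc]
  rsmul_mul a b := by ext x; simp [mul_assoc]
  lsmul_rsmul a b := by ext x; simp [mul_assoc]
  bound := by
    refine ⟨1, fun a => ⟨?_, ?_⟩⟩
    · simpa using ContinuousLinearMap.opNorm_mul_apply_le ℂ A a
    · refine le_trans (opNorm_le_bound _ (norm_nonneg a) fun x => ?_) (by simp)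
      simpa [mul_comm] using norm_mul_le x a


/-- The `n`-th dual `A^(n)` of `A` as a Banach `A`-bimodule. -/
noncomputable def iterDual : ℕ → BBimod A
  | 0 => BBimod.base A
  | n + 1 => (iterDual n).dual

variable {A}

/-- `D` is a derivation from `A` into the Banach bimodule `M`. -/
def IsDerivation (M : BBimod A) (D : A →L[ℂ] M.carrier) : Prop :=
  ∀ a b : A, D (a * b) = M.lsmul a (D b) + M.rsmul b (D a)

/-- `D` is an inner derivation. -/
def IsInner (M : BBimod A) (D : A →L[ℂ] M.carrier) : Prop :=
  ∃ x : M.carrier, ∀ a : A, D a = M.lsmul a x - M.rsmul a x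

/-- `D` is approximately inner: there is a net `(x_i)` in `M` with
`D a = lim_i (a·x_i − x_i·a)` for every `a`. -/
def IsApproxInner (M : BBimod A) (D : A →L[ℂ] M.carrier) : Prop :=
  ∃ (ι : Type) (l : Filter ι) (x : ι → M.carrier), l.NeBot ∧
    ∀ a : A, Tendsto (fun i => M.lsmul a (x i) - M.rsmul a (x i)) l (𝓝 (D a))

variable (A)

/-- `A` is weakly amenable. -/
def WeaklyAmenable : Prop :=
  ∀ D : A →L[ℂ] (iterDual A 1).carrier, IsDerivation (iterDual A 1) D → IsInner (iterDual A 1) D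

/-- `A` is approximately `n`-weakly amenable. -/
def ApproxNWeaklyAmenable (n : ℕ) : Prop :=
  ∀ D : A →L[ℂ] (iterDual A n).carrier,
    IsDerivation (iterDual A n) D → IsApproxInner (iterDual A n) D

/-- `A` is `n`-weakly amenable. -/
def NWeaklyAmenable (n : ℕ) : Prop :=
  ∀ D : A →L[ℂ] (iterDual A n).carrier,
    IsDerivation (iterDual A n) D → IsInner (iterDual A n) D

/-- `A` is approximately weakly amenable. -/
def ApproxWeaklyAmenable : Prop := ApproxNWeaklyAmenable A 1

/-- `A` is approximately amenable: every continuous derivation into the dual of a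
Banach `A`-bimodule is approximately inner. -/
def ApproxAmenable : Prop :=
  ∀ (X : BBimod A) (D : A →L[ℂ] X.dual.carrier), IsDerivation X.dual D → IsApproxInner X.dual D

section SecondDual
variable (A : Type) [NonUnitalNormedRing A] [NormedSpace ℂ A]
  [IsScalarTower ℂ A A] [SMulCommClass ℂ A A]

/-- The map `f ↦ n □ f` entering the definition of the first Arens product. -/
noncomputable def arensAux (n : (A →L[ℂ] ℂ) →L[ℂ] ℂ) :
    (A →L[ℂ] ℂ) →L[ℂ] (A →L[ℂ] ℂ) :=
  (compL ℂ A (A →L[ℂ] ℂ) ℂ n).comp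
    (((compL ℂ A (A →L[ℂ] A) (A →L[ℂ] ℂ)).flip (ContinuousLinearMap.mul ℂ A)).comp
      (compL ℂ A A ℂ))

/-- The first Arens product `m □ n` on the second dual of `A`. -/
noncomputable def arens (m n : (A →L[ℂ] ℂ) →L[ℂ] ℂ) : (A →L[ℂ] ℂ) →L[ℂ] ℂ :=
  m.comp (arensAux A n)

variable {A}

lemma arens_add_left (m n p : (A →L[ℂ] ℂ) →L[ℂ] ℂ) :
    arens A (m + n) p = arens A m p + arens A n p := by
  ext f; simp [arens]

lemma arens_add_right (m n p : (A →L[ℂ] ℂ) →L[ℂ] ℂ) :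
    arens A m (n + p) = arens A m n + arens A m p := by
  ext f; simp [arens, arensAux, map_add]

lemma arens_zero_left (m : (A →L[ℂ] ℂ) →L[ℂ] ℂ) : arens A 0 m = 0 := by
  ext f; simp [arens]

lemma arens_zero_right (m : (A →L[ℂ] ℂ) →L[ℂ] ℂ) : arens A m 0 = 0 := by
  ext f
  have h0 : arensAux A (0 : (A →L[ℂ] ℂ) →L[ℂ] ℂ) f = 0 := by ext a; rfl
  show m (arensAux A 0 f) = 0
  rw [h0, map_zero]

lemma arens_smul_left (c : ℂ) (m n : (A →L[ℂ] ℂ) →L[ℂ] ℂ) :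
    arens A (c • m) n = c • arens A m n := by
  ext f; simp [arens]

lemma arens_smul_right (c : ℂ) (m n : (A →L[ℂ] ℂ) →L[ℂ] ℂ) :
    arens A m (c • n) = c • arens A m n := by
  ext f
  have hs : arensAux A (c • n) f = c • arensAux A n f := by ext a; rfl
  show m (arensAux A (c • n) f) = c • m (arensAux A n f)
  rw [hs, map_smul]

lemma arens_assoc (m n p : (A →L[ℂ] ℂ) →L[ℂ] ℂ) :
    arens A (arens A m n) p = arens A m (arens A n p) := by
  ext f
  show m (arensAux A n (arensAux A p f)) = m (arensAux A (arens A n p) f)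
  congr 1
  ext a
  show n ((arensAux A p f).comp (ContinuousLinearMap.mul ℂ A a)) =
    n (arensAux A p (f.comp (ContinuousLinearMap.mul ℂ A a)))
  congr 1
  ext b
  show p (f.comp (ContinuousLinearMap.mul ℂ A (a * b))) =
    p ((f.comp (ContinuousLinearMap.mul ℂ A a)).comp (ContinuousLinearMap.mul ℂ A b))
  congr 1
  ext c
  exact congrArg f (mul_assoc a b c)

lemma arens_norm (m n : (A →L[ℂ] ℂ) →L[ℂ] ℂ) : ‖arens A m n‖ ≤ ‖m‖ * ‖n‖ := by
  have hAux : ‖arensAux A n‖ ≤ ‖n‖ := by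
    refine opNorm_le_bound _ (norm_nonneg n) fun f => ?_
    have hHf : ‖(((compL ℂ A (A →L[ℂ] A) (A →L[ℂ] ℂ)).flip
        (ContinuousLinearMap.mul ℂ A)).comp (compL ℂ A A ℂ)) f‖ ≤ ‖f‖ := by
      refine opNorm_le_bound _ (norm_nonneg f) fun a => ?_
      show ‖f.comp (ContinuousLinearMap.mul ℂ A a)‖ ≤ ‖f‖ * ‖a‖
      calc ‖f.comp (ContinuousLinearMap.mul ℂ A a)‖
          ≤ ‖f‖ * ‖ContinuousLinearMap.mul ℂ A a‖ := opNorm_comp_le _ _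
        _ ≤ ‖f‖ * ‖a‖ :=
            mul_le_mul_of_nonneg_left (ContinuousLinearMap.opNorm_mul_apply_le ℂ A a)
              (norm_nonneg f)
    calc ‖arensAux A n f‖
        ≤ ‖n‖ * ‖(((compL ℂ A (A →L[ℂ] A) (A →L[ℂ] ℂ)).flip
            (ContinuousLinearMap.mul ℂ A)).comp (compL ℂ A A ℂ)) f‖ := opNorm_comp_le _ _
      _ ≤ ‖n‖ * ‖f‖ := mul_le_mul_of_nonneg_left hHf (norm_nonneg n)
  calc ‖arens A m n‖ ≤ ‖m‖ * ‖arensAux A n‖ := opNorm_comp_le _ _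
    _ ≤ ‖m‖ * ‖n‖ := mul_le_mul_of_nonneg_left hAux (norm_nonneg m)

variable (A)

/-- The second dual `A**` of `A`, as a type synonym, equipped with the
first Arens product. -/
def SecondDual : Type := (A →L[ℂ] ℂ) →L[ℂ] ℂ

noncomputable instance : NormedAddCommGroup (SecondDual A) :=
  (inferInstance : NormedAddCommGroup ((A →L[ℂ] ℂ) →L[ℂ] ℂ))

noncomputable instance : NonUnitalNormedRing (SecondDual A) :=
  { (inferInstance : NormedAddCommGroup (SecondDual A)) with
    mul := arens A
    left_distrib := fun m n p => arens_add_right m n p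
    right_distrib := fun m n p => arens_add_left m n p
    zero_mul := fun m => arens_zero_left m
    mul_zero := fun m => arens_zero_right m
    mul_assoc := fun m n p => arens_assoc m n p
    norm_mul_le := fun m n => arens_norm m n }

noncomputable instance : NormedSpace ℂ (SecondDual A) :=
  (inferInstance : NormedSpace ℂ ((A →L[ℂ] ℂ) →L[ℂ] ℂ))

instance : CompleteSpace (SecondDual A) :=
  (inferInstance : CompleteSpace ((A →L[ℂ] ℂ) →L[ℂ] ℂ))

instance : IsScalarTower ℂ (SecondDual A) (SecondDual A) :=
  ⟨fun c m n => arens_smul_left c m n⟩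

instance : SMulCommClass ℂ (SecondDual A) (SecondDual A) :=
  ⟨fun c m n => (arens_smul_right c m n).symm⟩

/-- The canonical embedding of `A` into its second dual. -/
noncomputable def canEmb : A →L[ℂ] SecondDual A := ContinuousLinearMap.apply ℂ ℂ

end SecondDual

/-- A bounded operator is weakly compact if the closure of the image of the closed
unit ball is compact in the weak topology. -/
def IsWeaklyCompactOp {X Y : Type} [NormedAddCommGroup X] [NormedSpace ℂ X]
    [NormedAddCommGroup Y] [NormedSpace ℂ Y] (T : X →L[ℂ] Y) : Prop :=
  IsCompact (closure ((toWeakSpace ℂ Y) '' (T '' Metric.closedBall 0 1)))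
variable (A : Type) [NonUnitalNormedRing A] [NormedSpace ℂ A]
  [IsScalarTower ℂ A A] [SMulCommClass ℂ A A] [CompleteSpace A]

section KeyLemmas

open NormedSpace Metric

variable {X : Type} [NormedAddCommGroup X] [NormedSpace ℂ X]

/-- Helly-type approximation lemma: any element of the second dual can be approximated on
finitely many functionals by an element of a slightly larger ball of `X`. -/
lemma helly_approx (m : (X →L[ℂ] ℂ) →L[ℂ] ℂ) (s : Finset (X →L[ℂ] ℂ)) {ε : ℝ} (hε : 0 < ε) :
    ∃ a : X, ‖a‖ ≤ ‖m‖ + 1 ∧ ∀ f ∈ s, ‖f a - m f‖ < ε := by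
  classical
  set r : ℝ := ‖m‖ + 1 with hrdef
  have hr0 : 0 < r := by positivity
  have hmr : ‖m‖ < r := lt_add_of_pos_right _ one_pos
  set S : X → (↥s → ℂ) := fun a i => (i : X →L[ℂ] ℂ) a with hSdef
  set V : Set (↥s → ℂ) := S '' Metric.closedBall 0 r with hVdef
  set c : ↥s → ℂ := fun i => m i with hcdef
  have hc : c ∈ closure V := by
    by_contra hc
    have hVconv : Convex ℝ V := by
      rintro x ⟨ax, hax, rfl⟩ y ⟨ay, hay, rfl⟩ t1 t2 ht1 ht2 hsum
      refine ⟨(t1 : ℂ) • ax + (t2 : ℂ) • ay, ?_, ?_⟩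
      · rw [Metric.mem_closedBall, dist_zero_right] at hax hay ⊢
        calc ‖(t1:ℂ) • ax + (t2:ℂ) • ay‖ ≤ ‖(t1:ℂ) • ax‖ + ‖(t2:ℂ) • ay‖ := norm_add_le _ _
          _ ≤ t1 * r + t2 * r := by
              rw [norm_smul, norm_smul, Complex.norm_real, Complex.norm_real,
                Real.norm_eq_abs, Real.norm_eq_abs, abs_of_nonneg ht1, abs_of_nonneg ht2]
              gcongr
          _ = r := by rw [← add_mul, hsum, one_mul]
      · funext i
        simp only [hSdef, map_add, map_smul, Pi.add_apply, Pi.smul_apply, smul_eq_mul,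
          Complex.real_smul]
    obtain ⟨φ, u, hu, huc⟩ :=
      geometric_hahn_banach_closed_point hVconv.closure isClosed_closure hc
    set μ : ↥s → ℂ := fun i =>
      (φ (Pi.single i 1) : ℂ) - (φ (Pi.single i Complex.I) : ℂ) * Complex.I with hμdef
    have hφ : ∀ z : ↥s → ℂ, φ z = (∑ i, μ i * z i).re := by
      intro z
      have hz : ∑ i, Pi.single i (z i) = z := Finset.univ_sum_single z
      conv_lhs => rw [← hz]
      rw [map_sum, Complex.re_sum]
      refine Finset.sum_congr rfl fun i _ => ?_
      have h1 : Pi.single i (z i)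
          = (z i).re • (Pi.single i (1 : ℂ) : ↥s → ℂ) + (z i).im • (Pi.single i Complex.I : ↥s → ℂ) := by
        funext j
        rcases eq_or_ne j i with rfl | hji
        · simp only [Pi.single_eq_same, Pi.add_apply, Pi.smul_apply, Complex.real_smul,
            mul_one]
          exact (Complex.re_add_im (z j)).symm
        · simp [Pi.single_eq_of_ne hji]
      rw [h1, map_add, map_smul, map_smul]
      simp only [hμdef, smul_eq_mul, Complex.mul_re, Complex.sub_re, Complex.ofReal_re,
        Complex.mul_im, Complex.sub_im, Complex.ofReal_im, Complex.I_re, Complex.I_im]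
      ring
    set g : X →L[ℂ] ℂ := ∑ i : ↥s, μ i • (i : X →L[ℂ] ℂ) with hgdef
    have hgapp : ∀ a : X, g a = ∑ i : ↥s, μ i * (i : X →L[ℂ] ℂ) a := by
      intro a
      rw [hgdef, ContinuousLinearMap.sum_apply]
      refine Finset.sum_congr rfl fun i _ => ?_
      rw [ContinuousLinearMap.smul_apply, smul_eq_mul]
    have hφS : ∀ a : X, φ (S a) = (g a).re := by intro a; rw [hφ, hgapp]
    have hφc : φ c = (m g).re := by
      rw [hφ]
      congr 1
      rw [hgdef, map_sum]
      refine Finset.sum_congr rfl fun i _ => ?_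
      rw [map_smul, smul_eq_mul]
    have h0V : (0 : ↥s → ℂ) ∈ V :=
      ⟨0, Metric.mem_closedBall_self hr0.le, by funext i; simp [hSdef]⟩
    have hu0 : 0 < u := by
      have := hu 0 (subset_closure h0V)
      simpa using this
    have hball : ∀ a : X, ‖a‖ ≤ r → ‖g a‖ < u := by
      intro a har
      rcases eq_or_ne (g a) 0 with hga | hga
      · simpa [hga] using hu0
      · set θ : ℂ := (‖g a‖ : ℂ) / g a with hθdef
        have hθ : ‖θ‖ = 1 := by
          rw [hθdef, norm_div, Complex.norm_real, Real.norm_eq_abs,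
            abs_of_nonneg (norm_nonneg _)]
          exact div_self (norm_ne_zero_iff.mpr hga)
        have hmem : θ • a ∈ Metric.closedBall (0 : X) r := by
          rw [Metric.mem_closedBall, dist_zero_right, norm_smul, hθ, one_mul]; exact har
        have hlt := hu (S (θ • a)) (subset_closure ⟨θ • a, hmem, rfl⟩)
        rw [hφS] at hlt
        have hval : g (θ • a) = (‖g a‖ : ℂ) := by
          rw [map_smul, smul_eq_mul, hθdef, div_mul_cancel₀ _ hga]
        rw [hval] at hlt
        simpa using hlt
    have hgnorm : ‖g‖ ≤ u / r := by
      refine ContinuousLinearMap.opNorm_le_bound _ (by positivity) fun a => ?_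
      rcases eq_or_ne a 0 with rfl | ha0
      · simp
      · have hna : 0 < ‖a‖ := norm_pos_iff.mpr ha0
        set t : ℝ := r / ‖a‖ with htdef
        have ht0 : 0 < t := by positivity
        have hnorm : ‖(t : ℂ) • a‖ ≤ r := by
          rw [norm_smul, Complex.norm_real, Real.norm_eq_abs, abs_of_pos ht0, htdef,
            div_mul_cancel₀ _ (ne_of_gt hna)]
        have hb := (hball ((t : ℂ) • a) hnorm).le
        rw [map_smul, smul_eq_mul, norm_mul, Complex.norm_real, Real.norm_eq_abs,
          abs_of_pos ht0, htdef] at hb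
        rw [div_mul_eq_mul_div, div_le_iff₀ hna] at hb
        rw [div_mul_eq_mul_div, le_div_iff₀ hr0]
        linarith [hb]
    have habs : u < u := by
      calc u < φ c := huc
        _ = (m g).re := hφc
        _ ≤ ‖m g‖ := by
            exact Complex.re_le_norm _
        _ ≤ ‖m‖ * ‖g‖ := ContinuousLinearMap.le_opNorm m g
        _ ≤ ‖m‖ * (u / r) := mul_le_mul_of_nonneg_left hgnorm (norm_nonneg m)
        _ < r * (u / r) := mul_lt_mul_of_pos_right hmr (by positivity)
        _ = u := by field_simp
    exact absurd habs (lt_irrefl u)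
  obtain ⟨v, hvV, hvc⟩ := Metric.mem_closure_iff.mp hc ε hε
  obtain ⟨a, haball, rfl⟩ := hvV
  rw [Metric.mem_closedBall, dist_zero_right] at haball
  refine ⟨a, haball, fun f hf => ?_⟩
  calc ‖f a - m f‖ = ‖(c - S a) ⟨f, hf⟩‖ := by
        simp only [hcdef, hSdef, Pi.sub_apply]
        rw [norm_sub_rev]
    _ ≤ ‖c - S a‖ := norm_le_pi_norm _ _
    _ = dist c (S a) := (dist_eq_norm _ _).symm
    _ < ε := hvc

/-- Goldstine's theorem: the image of a ball of `X` of radius `> ‖m‖` in the second dual is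
weak-star dense enough to approximate `m`. -/
lemma goldstine (m : (X →L[ℂ] ℂ) →L[ℂ] ℂ) :
    ∀ V ∈ 𝓝 (StrongDual.toWeakDual m : WeakDual ℂ (X →L[ℂ] ℂ)),
      ∃ a : X, ‖a‖ ≤ ‖m‖ + 1 ∧ StrongDual.toWeakDual (ContinuousLinearMap.apply ℂ ℂ a) ∈ V := by
  intro V hV
  classical
  have hemb : IsInducing (fun (x : WeakDual ℂ (X →L[ℂ] ℂ)) (y : X →L[ℂ] ℂ) =>
      topDualPairing ℂ (X →L[ℂ] ℂ) x y) :=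
    (WeakBilin.isEmbedding (B := topDualPairing ℂ (X →L[ℂ] ℂ))
      ContinuousLinearMap.coe_injective).toIsInducing
  rw [hemb.nhds_eq_comap, Filter.mem_comap] at hV
  obtain ⟨P, hP, hPV⟩ := hV
  rw [nhds_pi, Filter.mem_pi] at hP
  obtain ⟨I, hIfin, t, ht, htP⟩ := hP
  have hballs : ∀ f : X →L[ℂ] ℂ, ∃ ε : ℝ, 0 < ε ∧ Metric.ball (m f) ε ⊆ t f := by
    intro f
    obtain ⟨ε, hε, hsub⟩ := Metric.mem_nhds_iff.mp (ht f)
    exact ⟨ε, hε, hsub⟩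
  choose εf hεf hsub using hballs
  set s' : Finset (X →L[ℂ] ℂ) := hIfin.toFinset with hs'def
  set ε : ℝ := if hne : s'.Nonempty then s'.inf' hne εf else 1 with hεdef
  have hε0 : 0 < ε := by
    rw [hεdef]
    split
    · next hne => exact (Finset.lt_inf'_iff hne).mpr fun f _ => hεf f
    · exact one_pos
  obtain ⟨a, hanorm, ha⟩ := helly_approx m s' hε0
  refine ⟨a, hanorm, hPV ?_⟩
  apply htP
  rw [Set.mem_pi]
  intro f hfI
  apply hsub f
  have hfs : f ∈ s' := hIfin.mem_toFinset.mpr hfI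
  have h1 : ‖f a - m f‖ < ε := ha f hfs
  have h2 : ε ≤ εf f := by
    rw [hεdef, dif_pos ⟨f, hfs⟩]
    exact Finset.inf'_le _ hfs
  show dist (f a) (m f) < εf f
  rw [dist_eq_norm]
  exact lt_of_lt_of_le h1 h2

/-- The key consequence of weak compactness: if every bounded operator `X → X*` is weakly
compact, then for any `T : X → X*` the second adjoint of `T` takes values in (the canonical
image of) `X*`. -/
lemma key_weakCompact (hwc : ∀ T : X →L[ℂ] (X →L[ℂ] ℂ), IsWeaklyCompactOp T)
    (T : X →L[ℂ] (X →L[ℂ] ℂ)) (m : (X →L[ℂ] ℂ) →L[ℂ] ℂ) :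
    ∃ g : X →L[ℂ] ℂ, ∀ n : (X →L[ℂ] ℂ) →L[ℂ] ℂ, m (n.comp T) = n g := by
  classical
  set r : ℝ := ‖m‖ + 1 with hrdef
  have hr0 : 0 < r := by positivity
  set T' : X →L[ℂ] (X →L[ℂ] ℂ) := (r : ℂ) • T with hT'def
  have hK : IsCompact (closure ((toWeakSpace ℂ (X →L[ℂ] ℂ)) ''
      (T' '' Metric.closedBall 0 1))) := hwc T'
  set κ : X → WeakDual ℂ (X →L[ℂ] ℂ) :=
    fun a => StrongDual.toWeakDual (ContinuousLinearMap.apply ℂ ℂ a) with hκdef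
  set l : Filter X := Filter.comap κ (𝓝 (StrongDual.toWeakDual m)) ⊓
    Filter.principal (Metric.closedBall 0 r) with hldef
  have hlne : l.NeBot := by
    rw [hldef, Filter.inf_principal_neBot_iff]
    intro U hU
    obtain ⟨V, hV, hVU⟩ := Filter.mem_comap.mp hU
    obtain ⟨a, hanorm, haV⟩ := goldstine m V hV
    exact ⟨a, hVU haV, by rw [Metric.mem_closedBall, dist_zero_right]; exact hanorm⟩
  have hlκ : Filter.Tendsto κ l (𝓝 (StrongDual.toWeakDual m)) :=
    Filter.tendsto_iff_comap.mpr inf_le_left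
  set σ : X → WeakSpace ℂ (X →L[ℂ] ℂ) := fun a => toWeakSpace ℂ (X →L[ℂ] ℂ) (T a) with hσdef
  have hσK : ∀ a ∈ Metric.closedBall (0 : X) r, σ a ∈ closure ((toWeakSpace ℂ (X →L[ℂ] ℂ)) ''
      (T' '' Metric.closedBall 0 1)) := by
    intro a ha
    apply subset_closure
    refine ⟨T a, ⟨(r : ℂ)⁻¹ • a, ?_, ?_⟩, rfl⟩
    · rw [Metric.mem_closedBall, dist_zero_right] at ha ⊢
      rw [norm_smul, norm_inv, Complex.norm_real, Real.norm_eq_abs, abs_of_pos hr0]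
      rw [inv_mul_le_iff₀ hr0, mul_one]
      exact ha
    · rw [hT'def, ContinuousLinearMap.smul_apply, map_smul, smul_smul,
        mul_inv_cancel₀ (by exact_mod_cast ne_of_gt hr0), one_smul]
  have hmap : Filter.map σ l ≤ Filter.principal (closure ((toWeakSpace ℂ (X →L[ℂ] ℂ)) ''
      (T' '' Metric.closedBall 0 1))) := by
    rw [Filter.le_principal_iff, Filter.mem_map]
    exact Filter.mem_of_superset
      (Filter.mem_inf_of_right (Filter.mem_principal_self _)) hσK
  obtain ⟨gw, hgwmem, hgw⟩ := hK.exists_clusterPt hmap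
  set l' : Filter X := l ⊓ Filter.comap σ (𝓝 gw) with hl'def
  have hl'ne : l'.NeBot := by
    apply Filter.NeBot.of_map (m := σ)
    rw [hl'def, Filter.push_pull]
    rw [inf_comm]
    exact hgw.neBot
  refine ⟨(toWeakSpace ℂ (X →L[ℂ] ℂ)).symm gw, fun n => ?_⟩
  have h1 : Filter.Tendsto (fun a => n (T a)) l'
      (𝓝 (n ((toWeakSpace ℂ (X →L[ℂ] ℂ)).symm gw))) := by
    have hσt : Filter.Tendsto σ l' (𝓝 gw) := Filter.tendsto_iff_comap.mpr inf_le_right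
    have hcont : Continuous fun y : WeakSpace ℂ (X →L[ℂ] ℂ) =>
        (topDualPairing ℂ (X →L[ℂ] ℂ)).flip y n :=
      WeakBilin.eval_continuous _ n
    exact (hcont.tendsto gw).comp hσt
  have h2 : Filter.Tendsto (fun a => n (T a)) l' (𝓝 (m (n.comp T))) := by
    have hκt : Filter.Tendsto κ l' (𝓝 (StrongDual.toWeakDual m)) := hlκ.mono_left inf_le_left
    have hcont : Continuous fun y : WeakDual ℂ (X →L[ℂ] ℂ) => y (n.comp T) :=
      WeakDual.eval_continuous _
    exact (hcont.tendsto _).comp hκt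
  exact tendsto_nhds_unique h2 h1

end KeyLemmas

/-- If every bounded operator `A → A*` is weakly compact and `A**` (first Arens
product) is approximately weakly amenable, then `A` is approximately weakly
amenable. -/
theorem approxWeaklyAmenable_of_secondDual
    (hwc : ∀ T : A →L[ℂ] (A →L[ℂ] ℂ), IsWeaklyCompactOp T)
    (h : ApproxWeaklyAmenable (SecondDual A)) :
    ApproxWeaklyAmenable A := by
  intro D hD
  classical
  -- `D` viewed as a map into `A* = A →L[ℂ] ℂ`
  let D₀ : A →L[ℂ] (A →L[ℂ] ℂ) := D
  let mulA := ContinuousLinearMap.mul ℂ A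
  -- coercion from the type synonym `SecondDual A`
  let uc : SecondDual A → ((A →L[ℂ] ℂ) →L[ℂ] ℂ) := fun q => q
  -- pre-composition with right/left multiplications
  let preR : A →L[ℂ] ((A →L[ℂ] ℂ) →L[ℂ] (A →L[ℂ] ℂ)) :=
    ((compL ℂ A A ℂ).flip).comp (mulA.flip)
  let preL : A →L[ℂ] ((A →L[ℂ] ℂ) →L[ℂ] (A →L[ℂ] ℂ)) :=
    ((compL ℂ A A ℂ).flip).comp mulA
  have hD' : ∀ a b : A, D₀ (a * b) = preR a (D₀ b) + preL b (D₀ a) := hD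
  -- the second adjoint of `D`
  let Dstar : ((A →L[ℂ] ℂ) →L[ℂ] ℂ) →L[ℂ] (A →L[ℂ] ℂ) := (compL ℂ A (A →L[ℂ] ℂ) ℂ).flip D₀
  let Ddd : SecondDual A →L[ℂ] ((iterDual (SecondDual A) 1).carrier) :=
    (compL ℂ (SecondDual A) (A →L[ℂ] ℂ) ℂ).flip Dstar
  -- `Ddd` is a derivation for the first Arens product
  have hDer : IsDerivation (iterDual (SecondDual A) 1) Ddd := by
    intro m n
    apply ContinuousLinearMap.ext
    intro p
    show (uc m) (arensAux A (uc n) ((uc p).comp D₀))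
      = (uc n) ((arens A (uc p) (uc m)).comp D₀)
        + (uc m) ((arens A (uc n) (uc p)).comp D₀)
    -- the bilinear gadget `Φ₁ a b = p (a • D b)`
    let Φ₁ : A →L[ℂ] (A →L[ℂ] ℂ) :=
      (compL ℂ A (A →L[ℂ] ℂ) ℂ (uc p)).comp
        (((compL ℂ A (A →L[ℂ] ℂ) (A →L[ℂ] ℂ)).flip D₀).comp preR)
    have hsplit : arensAux A (uc n) ((uc p).comp D₀)
        = (uc n).comp Φ₁ + (arens A (uc n) (uc p)).comp D₀ := by
      ext a
      have e1 : ((uc p).comp D₀).comp (mulA a) = Φ₁ a + arensAux A (uc p) (D₀ a) := by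
        ext b
        calc (((uc p).comp D₀).comp (mulA a)) b = (uc p) (D₀ (a * b)) := rfl
          _ = (uc p) (preR a (D₀ b) + preL b (D₀ a)) := by rw [hD' a b]
          _ = (uc p) (preR a (D₀ b)) + (uc p) (preL b (D₀ a)) := map_add _ _ _
          _ = (Φ₁ a + arensAux A (uc p) (D₀ a)) b := rfl
      calc arensAux A (uc n) ((uc p).comp D₀) a
          = (uc n) (((uc p).comp D₀).comp (mulA a)) := rfl
        _ = (uc n) (Φ₁ a + arensAux A (uc p) (D₀ a)) := by rw [e1]
        _ = (uc n) (Φ₁ a) + (uc n) (arensAux A (uc p) (D₀ a)) := map_add _ _ _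
        _ = ((uc n).comp Φ₁ + (arens A (uc n) (uc p)).comp D₀) a := rfl
    obtain ⟨g₁, hg₁⟩ := key_weakCompact hwc Φ₁ (uc m)
    have hg₁eq : g₁ = (arens A (uc p) (uc m)).comp D₀ := by
      ext b
      obtain ⟨g₂, hg₂⟩ := key_weakCompact hwc (preL.flip (D₀ b)) (uc p)
      have hb1 : g₁ b = (uc m) (Φ₁.flip b) := by
        have h := hg₁ (ContinuousLinearMap.apply ℂ ℂ b)
        have e : (ContinuousLinearMap.apply ℂ ℂ b).comp Φ₁ = Φ₁.flip b := rfl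
        rw [e] at h
        exact h.symm
      have hb2 : (uc m) (Φ₁.flip b) = (uc m) g₂ := by
        congr 1
        ext a
        have h := hg₂ (ContinuousLinearMap.apply ℂ ℂ a)
        have e : (ContinuousLinearMap.apply ℂ ℂ a).comp (preL.flip (D₀ b))
            = preR a (D₀ b) := rfl
        rw [e] at h
        exact h
      have hb3 : (uc m) g₂ = (uc p) (arensAux A (uc m) (D₀ b)) := by
        have h := hg₂ (uc m)
        have e : (uc m).comp (preL.flip (D₀ b)) = arensAux A (uc m) (D₀ b) := rfl
        rw [e] at h
        exact h.symm
      have hb4 : ((arens A (uc p) (uc m)).comp D₀) b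
          = (uc p) (arensAux A (uc m) (D₀ b)) := rfl
      exact hb1.trans (hb2.trans (hb3.trans hb4.symm))
    calc (uc m) (arensAux A (uc n) ((uc p).comp D₀))
        = (uc m) ((uc n).comp Φ₁ + (arens A (uc n) (uc p)).comp D₀) := by rw [hsplit]
      _ = (uc m) ((uc n).comp Φ₁) + (uc m) ((arens A (uc n) (uc p)).comp D₀) := map_add _ _ _
      _ = (uc n) g₁ + (uc m) ((arens A (uc n) (uc p)).comp D₀) := by rw [hg₁ (uc n)]
      _ = (uc n) ((arens A (uc p) (uc m)).comp D₀)
          + (uc m) ((arens A (uc n) (uc p)).comp D₀) := by rw [hg₁eq]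
  -- apply the hypothesis to `Ddd` and push the approximating net down to `A*`
  obtain ⟨ι, l, x, hlne, hx⟩ := h Ddd hDer
  let R : ((iterDual (SecondDual A) 1).carrier) →L[ℂ] (A →L[ℂ] ℂ) :=
    (compL ℂ A (SecondDual A) ℂ).flip (canEmb A)
  have hmulκ : ∀ b c : A, canEmb A b * canEmb A c = canEmb A (b * c) :=
    fun b c => ContinuousLinearMap.ext fun f => rfl
  refine ⟨ι, l, fun i => R (x i), hlne, fun a => ?_⟩
  have h0 := hx (canEmb A a)
  have hRc : Filter.Tendsto (fun i => R ((iterDual (SecondDual A) 1).lsmul (canEmb A a) (x i)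
        - (iterDual (SecondDual A) 1).rsmul (canEmb A a) (x i))) l
      (𝓝 (R (Ddd (canEmb A a)))) :=
    (R.continuous.tendsto _).comp h0
  have hRD : R (Ddd (canEmb A a)) = D a := ContinuousLinearMap.ext fun b => rfl
  have hcompat : ∀ Λ : (iterDual (SecondDual A) 1).carrier,
      R ((iterDual (SecondDual A) 1).lsmul (canEmb A a) Λ
          - (iterDual (SecondDual A) 1).rsmul (canEmb A a) Λ)
      = (iterDual A 1).lsmul a (R Λ) - (iterDual A 1).rsmul a (R Λ) := by
    intro Λ
    rw [map_sub]
    congr 1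
  have hfinal := hRc.congr fun i => hcompat (x i)
  rw [hRD] at hfinal
  exact hfinal
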